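/- Let p ≥ 1, k > 0, let Λ be a p × p real diagonal matrix with strictly positive diagonal entries, Γ a p × p real orthogonal matrix, T a real p × (m − p) matrix and R = [1 | T]. Let W : ℝ → Matrix (Fin m) (Fin m) ℝ be continuous with W(t) positive semidefinite diagonal, and suppose there are T₀ > 0 and 0 < μ₁ ≤ μ₂ with μ₁ • 1 ≤ ∫_t^{t+T₀} (R ⬝ W(τ) ⬝ Rᵀ) dτ ≤ μ₂ • 1 in the Loewner order for all t ≥ 0. Set A(t) = −k • (Λ ⬝ Γᵀ ⬝ R ⬝ W(t) ⬝ Rᵀ ⬝ Γ). Then for every t₀ ≥ 0 and every differentiable solution y of y'(t) = A(t).mulVec(y t), one has μ̃₁·‖y(t₀)‖² ≤ ∫_{t₀}^{t₀+T₀} ‖(W(τ)^{1/2} ⬝ Rᵀ ⬝ Γ).mulVec(y τ)‖² dτ ≤ μ̃₂·‖y(t₀)‖², where μ̃₁ = μ₁/(1 + k·√p·‖Λ‖·μ₂)² and μ̃₂ = μ₂·exp(k²·p·‖Λ‖²·μ₂²), ‖Λ‖ denoting the operator norm and W(τ)^{1/2} the positive semidefinite square root of W(τ). -/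

import Mathlib

open MeasureTheory Matrix

/-- Entrywise interval integral of a matrix-valued function. -/
noncomputable def intMat {α β : Type*} (f : ℝ → Matrix α β ℝ) (a b : ℝ) : Matrix α β ℝ :=
  Matrix.of fun i j => ∫ τ in a..b, f τ i j

/-- Loewner order: `A ≤ B` iff `B - A` is positive semidefinite. -/
def loewnerLE {α : Type*} [Fintype α] (A B : Matrix α α ℝ) : Prop := (B - A).PosSemidef

/-- Euclidean norm of a vector. -/
noncomputable def euclNorm {α : Type*} [Fintype α] (v : α → ℝ) : ℝ :=
  Real.sqrt (∑ i, v i ^ 2)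

/-- Euclidean (ℓ²-ℓ²) operator norm of a matrix. -/
noncomputable def matOpNorm {α β : Type*} [Fintype α] [Fintype β] (A : Matrix α β ℝ) : ℝ :=
  sSup {r : ℝ | ∃ v : β → ℝ, euclNorm v ≤ 1 ∧ r = euclNorm (A.mulVec v)}

open scoped ComplexOrder in
/-- The positive semidefinite square root of a positive semidefinite matrix
(the definition `Matrix.PosSemidef.sqrt` of the older Mathlib, removed since). -/
noncomputable def Matrix.PosSemidef.sqrt {n 𝕜 : Type*} [Fintype n] [DecidableEq n] [RCLike 𝕜]
    {A : Matrix n n 𝕜} (hA : A.PosSemidef) : Matrix n n 𝕜 :=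
  hA.1.eigenvectorUnitary.1 * diagonal ((↑) ∘ (√·) ∘ hA.1.eigenvalues) *
  (star hA.1.eigenvectorUnitary : Matrix n n 𝕜)

lemma Matrix.PosSemidef.posSemidef_sqrt {n : Type*} [Fintype n] [DecidableEq n]
    {A : Matrix n n ℝ} (hA : A.PosSemidef) : hA.sqrt.PosSemidef := by
  have hD : (diagonal ((↑) ∘ (√·) ∘ hA.1.eigenvalues) : Matrix n n ℝ).PosSemidef :=
    Matrix.PosSemidef.diagonal fun i => by simp [Real.sqrt_nonneg]
  have h := hD.mul_mul_conjTranspose_same (hA.1.eigenvectorUnitary : Matrix n n ℝ)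
  rw [← Matrix.star_eq_conjTranspose] at h
  exact h

lemma Matrix.PosSemidef.sqrt_mul_self {n : Type*} [Fintype n] [DecidableEq n]
    {A : Matrix n n ℝ} (hA : A.PosSemidef) : hA.sqrt * hA.sqrt = A := by
  have hU : (star hA.1.eigenvectorUnitary : Matrix n n ℝ) * hA.1.eigenvectorUnitary = 1 :=
    Unitary.coe_star_mul_self _
  have hDD : (diagonal (RCLike.ofReal ∘ (√·) ∘ hA.1.eigenvalues) : Matrix n n ℝ) *
      diagonal (RCLike.ofReal ∘ (√·) ∘ hA.1.eigenvalues) = diagonal (RCLike.ofReal ∘ hA.1.eigenvalues) := by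
    rw [diagonal_mul_diagonal]
    congr 1
    funext i
    simp [Real.mul_self_sqrt (hA.eigenvalues_nonneg i)]
  conv_rhs => rw [hA.1.spectral_theorem]
  rw [Unitary.conjStarAlgAut_apply, Matrix.PosSemidef.sqrt]
  simp only [Matrix.mul_assoc]
  rw [← Matrix.mul_assoc (star hA.1.eigenvectorUnitary : Matrix n n ℝ), hU, Matrix.one_mul,
    ← Matrix.mul_assoc _ _ (star hA.1.eigenvectorUnitary : Matrix n n ℝ), hDD]

set_option linter.unusedSectionVars false
namespace Stmt7Aux

variable {ι : Type*} [Fintype ι] [DecidableEq ι]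

lemma dot_self_nonneg (v : ι → ℝ) : 0 ≤ v ⬝ᵥ v :=
  Finset.sum_nonneg fun _ _ => mul_self_nonneg _

lemma euclNorm_nonneg (v : ι → ℝ) : 0 ≤ euclNorm v := Real.sqrt_nonneg _

lemma euclNorm_eq (v : ι → ℝ) : euclNorm v = Real.sqrt (v ⬝ᵥ v) := by
  rw [euclNorm]; congr 1; simp [dotProduct, pow_two]

lemma euclNorm_sq (v : ι → ℝ) : euclNorm v ^ 2 = v ⬝ᵥ v := by
  rw [euclNorm_eq, Real.sq_sqrt (dot_self_nonneg v)]

lemma dot_le_norms (v u : ι → ℝ) : v ⬝ᵥ u ≤ euclNorm v * euclNorm u := by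
  have h := Finset.sum_mul_sq_le_sq_mul_sq Finset.univ v u
  calc v ⬝ᵥ u ≤ |v ⬝ᵥ u| := le_abs_self _
    _ = Real.sqrt ((v ⬝ᵥ u) ^ 2) := (Real.sqrt_sq_eq_abs _).symm
    _ ≤ Real.sqrt ((∑ i, v i ^ 2) * (∑ i, u i ^ 2)) := by
        apply Real.sqrt_le_sqrt; simpa [dotProduct] using h
    _ = euclNorm v * euclNorm u := by
        rw [euclNorm, euclNorm, ← Real.sqrt_mul (Finset.sum_nonneg fun _ _ => sq_nonneg _)]

lemma euclNorm_smul (c : ℝ) (v : ι → ℝ) : euclNorm (c • v) = |c| * euclNorm v := by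
  rw [euclNorm, euclNorm]
  have : ∀ i, (c • v) i ^ 2 = c ^ 2 * v i ^ 2 := by intro i; simp [mul_pow]
  simp_rw [this]
  rw [← Finset.mul_sum, Real.sqrt_mul (sq_nonneg c), Real.sqrt_sq_eq_abs]

lemma qf_nonneg {M : Matrix ι ι ℝ} (hM : M.PosSemidef) (x : ι → ℝ) : 0 ≤ x ⬝ᵥ M *ᵥ x := by
  simpa using hM.dotProduct_mulVec_nonneg x

lemma psd_transpose_eq {M : Matrix ι ι ℝ} (hM : M.PosSemidef) : Mᵀ = M := by
  have h := hM.1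
  rwa [Matrix.IsHermitian, Matrix.conjTranspose_eq_transpose_of_trivial] at h

lemma qf_symm {M : Matrix ι ι ℝ} (hM : Mᵀ = M) (a b : ι → ℝ) :
    a ⬝ᵥ M *ᵥ b = b ⬝ᵥ M *ᵥ a := by
  conv_lhs => rw [dotProduct_mulVec, ← hM, vecMul_transpose, dotProduct_comm]

lemma qf_cs_sq {M : Matrix ι ι ℝ} (hM : M.PosSemidef) (a b : ι → ℝ) :
    (a ⬝ᵥ M *ᵥ b) ^ 2 ≤ (a ⬝ᵥ M *ᵥ a) * (b ⬝ᵥ M *ᵥ b) := by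
  have hsym := psd_transpose_eq hM
  have key : ∀ t : ℝ, 0 ≤ (b ⬝ᵥ M *ᵥ b) * (t * t) + (2 * (a ⬝ᵥ M *ᵥ b)) * t + a ⬝ᵥ M *ᵥ a := by
    intro t
    have h0 := qf_nonneg hM (a + t • b)
    have expand : (a + t • b) ⬝ᵥ M *ᵥ (a + t • b)
        = (b ⬝ᵥ M *ᵥ b) * (t * t) + (2 * (a ⬝ᵥ M *ᵥ b)) * t + a ⬝ᵥ M *ᵥ a := by
      simp only [mulVec_add, mulVec_smul, dotProduct_add, add_dotProduct,
        dotProduct_smul, smul_dotProduct, smul_eq_mul, qf_symm hsym b a]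
      ring
    rwa [expand] at h0
  have hd := discrim_le_zero key
  rw [discrim] at hd
  nlinarith [hd]

lemma qf_cs {M : Matrix ι ι ℝ} (hM : M.PosSemidef) (a b : ι → ℝ) :
    a ⬝ᵥ M *ᵥ b ≤ Real.sqrt (a ⬝ᵥ M *ᵥ a) * Real.sqrt (b ⬝ᵥ M *ᵥ b) := by
  calc a ⬝ᵥ M *ᵥ b ≤ |a ⬝ᵥ M *ᵥ b| := le_abs_self _
    _ = Real.sqrt ((a ⬝ᵥ M *ᵥ b) ^ 2) := (Real.sqrt_sq_eq_abs _).symm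
    _ ≤ Real.sqrt ((a ⬝ᵥ M *ᵥ a) * (b ⬝ᵥ M *ᵥ b)) := Real.sqrt_le_sqrt (qf_cs_sq hM a b)
    _ = _ := Real.sqrt_mul (qf_nonneg hM a) _

lemma qf_cs_neg {M : Matrix ι ι ℝ} (hM : M.PosSemidef) (a b : ι → ℝ) :
    -(a ⬝ᵥ M *ᵥ b) ≤ Real.sqrt (a ⬝ᵥ M *ᵥ a) * Real.sqrt (b ⬝ᵥ M *ᵥ b) := by
  calc -(a ⬝ᵥ M *ᵥ b) ≤ |a ⬝ᵥ M *ᵥ b| := neg_le_abs _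
    _ = Real.sqrt ((a ⬝ᵥ M *ᵥ b) ^ 2) := (Real.sqrt_sq_eq_abs _).symm
    _ ≤ Real.sqrt ((a ⬝ᵥ M *ᵥ a) * (b ⬝ᵥ M *ᵥ b)) := Real.sqrt_le_sqrt (qf_cs_sq hM a b)
    _ = _ := Real.sqrt_mul (qf_nonneg hM a) _

/-- Cauchy–Schwarz for interval integrals of square roots. -/
lemma int_sqrt_mul_le {f g : ℝ → ℝ} {a b : ℝ} (hab : a ≤ b)
    (hf : Continuous f) (hg : Continuous g) (hf0 : ∀ τ, 0 ≤ f τ) (hg0 : ∀ τ, 0 ≤ g τ) :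
    (∫ τ in a..b, Real.sqrt (f τ) * Real.sqrt (g τ))
      ≤ Real.sqrt (∫ τ in a..b, f τ) * Real.sqrt (∫ τ in a..b, g τ) := by
  set I := ∫ τ in a..b, Real.sqrt (f τ) * Real.sqrt (g τ) with hI
  set A := ∫ τ in a..b, f τ with hA
  set B := ∫ τ in a..b, g τ with hB
  have hsc : Continuous fun τ => Real.sqrt (f τ) * Real.sqrt (g τ) :=
    (Real.continuous_sqrt.comp hf).mul (Real.continuous_sqrt.comp hg)
  have hA0 : 0 ≤ A := intervalIntegral.integral_nonneg hab fun τ _ => hf0 τ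
  have hB0 : 0 ≤ B := intervalIntegral.integral_nonneg hab fun τ _ => hg0 τ
  have hI0 : 0 ≤ I := intervalIntegral.integral_nonneg hab fun τ _ =>
    mul_nonneg (Real.sqrt_nonneg _) (Real.sqrt_nonneg _)
  have hq : ∀ ε : ℝ, 0 ≤ A * (ε * ε) + (-(2 * I)) * ε + B := by
    intro ε
    rcases le_or_gt ε 0 with hε | hε
    · have h1 : 0 ≤ A * (ε * ε) := mul_nonneg hA0 (mul_self_nonneg ε)
      nlinarith
    · have hpt : ∀ τ ∈ Set.Icc a b,
          2 * ε * (Real.sqrt (f τ) * Real.sqrt (g τ)) ≤ ε ^ 2 * f τ + g τ := by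
        intro τ _
        have hx : Real.sqrt (f τ) ^ 2 = f τ := Real.sq_sqrt (hf0 τ)
        have hu : Real.sqrt (g τ) ^ 2 = g τ := Real.sq_sqrt (hg0 τ)
        nlinarith [sq_nonneg (ε * Real.sqrt (f τ) - Real.sqrt (g τ))]
      have hint : 2 * ε * I ≤ ε ^ 2 * A + B := by
        calc 2 * ε * I = ∫ τ in a..b, 2 * ε * (Real.sqrt (f τ) * Real.sqrt (g τ)) := by
              rw [intervalIntegral.integral_const_mul]
          _ ≤ ∫ τ in a..b, (ε ^ 2 * f τ + g τ) := by
              apply intervalIntegral.integral_mono_on hab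
                ((continuous_const.mul hsc).intervalIntegrable a b)
                (((continuous_const.mul hf).add hg).intervalIntegrable a b) hpt
          _ = ε ^ 2 * A + B := by
              rw [intervalIntegral.integral_add (f := fun τ => ε ^ 2 * f τ)
                ((continuous_const.mul hf).intervalIntegrable a b)
                (hg.intervalIntegrable a b), intervalIntegral.integral_const_mul]
      nlinarith
  have hd := discrim_le_zero hq
  rw [discrim] at hd
  have hI2 : I ^ 2 ≤ A * B := by nlinarith
  calc I = Real.sqrt (I ^ 2) := (Real.sqrt_sq hI0).symm
    _ ≤ Real.sqrt (A * B) := Real.sqrt_le_sqrt hI2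
    _ = _ := Real.sqrt_mul hA0 _

lemma hasDerivAt_qf {A : ℝ → Matrix ι ι ℝ} {A' : Matrix ι ι ℝ} {a b : ℝ → ι → ℝ}
    {a' b' : ι → ℝ} {t : ℝ}
    (hA : ∀ i j, HasDerivAt (fun τ => A τ i j) (A' i j) t)
    (ha : ∀ i, HasDerivAt (fun τ => a τ i) (a' i) t)
    (hb : ∀ i, HasDerivAt (fun τ => b τ i) (b' i) t) :
    HasDerivAt (fun τ => a τ ⬝ᵥ (A τ) *ᵥ (b τ))
      (a' ⬝ᵥ A t *ᵥ b t + a t ⬝ᵥ A' *ᵥ b t + a t ⬝ᵥ A t *ᵥ b') t := by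
  have main : HasDerivAt (fun τ => ∑ i, ∑ j, a τ i * (A τ i j * b τ j))
      (∑ i, ∑ j, (a' i * (A t i j * b t j) +
        a t i * (A' i j * b t j + A t i j * b' j))) t := by
    apply HasDerivAt.fun_sum
    intro i _
    apply HasDerivAt.fun_sum
    intro j _
    exact (ha i).mul ((hA i j).mul (hb j))
  have hF : (fun τ => a τ ⬝ᵥ (A τ) *ᵥ (b τ))
      = fun τ => ∑ i, ∑ j, a τ i * (A τ i j * b τ j) := by
    funext τ
    simp [dotProduct, Matrix.mulVec, Finset.mul_sum]
  have e1 : a' ⬝ᵥ A t *ᵥ b t = ∑ i, ∑ j, a' i * (A t i j * b t j) := by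
    simp [dotProduct, Matrix.mulVec, Finset.mul_sum]
  have e2 : a t ⬝ᵥ A' *ᵥ b t = ∑ i, ∑ j, a t i * (A' i j * b t j) := by
    simp [dotProduct, Matrix.mulVec, Finset.mul_sum]
  have e3 : a t ⬝ᵥ A t *ᵥ b' = ∑ i, ∑ j, a t i * (A t i j * b' j) := by
    simp [dotProduct, Matrix.mulVec, Finset.mul_sum]
  rw [hF, e1, e2, e3]
  have hval : (∑ i, ∑ j, (a' i * (A t i j * b t j)))
      + (∑ i, ∑ j, (a t i * (A' i j * b t j)))
      + (∑ i, ∑ j, (a t i * (A t i j * b' j)))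
      = ∑ i, ∑ j, (a' i * (A t i j * b t j) +
        a t i * (A' i j * b t j + A t i j * b' j)) := by
    rw [← Finset.sum_add_distrib, ← Finset.sum_add_distrib]
    refine Finset.sum_congr rfl fun i _ => ?_
    rw [← Finset.sum_add_distrib, ← Finset.sum_add_distrib]
    refine Finset.sum_congr rfl fun j _ => ?_
    ring
  rw [hval]
  exact main

lemma intervalIntegrable_sum {g : ι → ℝ → ℝ} {a b : ℝ}
    (h : ∀ i, IntervalIntegrable (g i) volume a b) :
    IntervalIntegrable (fun τ => ∑ i, g i τ) volume a b := by
  have heq : (fun τ => ∑ i, g i τ) = (∑ i, g i) := by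
    funext τ; simp
  rw [heq]
  exact IntervalIntegrable.sum Finset.univ (fun i _ => h i)

lemma dot_intMat {F : ℝ → Matrix ι ι ℝ} {a b : ℝ}
    (hF : ∀ i j, Continuous fun τ => F τ i j) (x z : ι → ℝ) :
    x ⬝ᵥ (intMat F a b) *ᵥ z = ∫ τ in a..b, x ⬝ᵥ (F τ) *ᵥ z := by
  have h1 : ∀ i j, IntervalIntegrable (fun τ => x i * (F τ i j * z j)) volume a b :=
    fun i j => (continuous_const.mul ((hF i j).mul continuous_const)).intervalIntegrable a b
  have step1 : x ⬝ᵥ (intMat F a b) *ᵥ z = ∑ i, ∑ j, x i * ((∫ τ in a..b, F τ i j) * z j) := by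
    simp [intMat, dotProduct, Matrix.mulVec, Finset.mul_sum]
  have step2 : ∀ i j, x i * ((∫ τ in a..b, F τ i j) * z j)
      = ∫ τ in a..b, x i * (F τ i j * z j) := by
    intro i j
    rw [intervalIntegral.integral_const_mul, intervalIntegral.integral_mul_const]
  have step3 : (∫ τ in a..b, ∑ i, ∑ j, x i * (F τ i j * z j))
      = ∑ i, ∑ j, ∫ τ in a..b, x i * (F τ i j * z j) := by
    have houter := intervalIntegral.integral_finset_sum (μ := volume) (a := a) (b := b)
      (s := Finset.univ) (f := fun i τ => ∑ j, x i * (F τ i j * z j))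
      (fun i _ => intervalIntegrable_sum (fun j => h1 i j))
    have hinner : ∀ i : ι, (∫ τ in a..b, ∑ j, x i * (F τ i j * z j))
        = ∑ j, ∫ τ in a..b, x i * (F τ i j * z j) := fun i =>
      intervalIntegral.integral_finset_sum (s := Finset.univ)
        (f := fun j τ => x i * (F τ i j * z j)) (fun j _ => h1 i j)
    exact houter.trans (Finset.sum_congr rfl fun i _ => hinner i)
  have step4 : (∫ τ in a..b, x ⬝ᵥ (F τ) *ᵥ z)
      = ∫ τ in a..b, ∑ i, ∑ j, x i * (F τ i j * z j) := by
    apply intervalIntegral.integral_congr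
    intro τ _
    simp [dotProduct, Matrix.mulVec, Finset.mul_sum]
  rw [step1, step4, step3]
  exact Finset.sum_congr rfl fun i _ => Finset.sum_congr rfl fun j _ => step2 i j

lemma continuous_qf {A : ℝ → Matrix ι ι ℝ} {u v : ℝ → ι → ℝ}
    (hA : ∀ i j, Continuous fun τ => A τ i j)
    (hu : ∀ i, Continuous fun τ => u τ i) (hv : ∀ i, Continuous fun τ => v τ i) :
    Continuous fun τ => u τ ⬝ᵥ (A τ) *ᵥ (v τ) := by
  have : (fun τ => u τ ⬝ᵥ (A τ) *ᵥ (v τ))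
      = fun τ => ∑ i, ∑ j, u τ i * (A τ i j * v τ j) := by
    funext τ; simp [dotProduct, Matrix.mulVec, Finset.mul_sum]
  rw [this]
  exact continuous_finset_sum _ fun i _ => continuous_finset_sum _ fun j _ =>
    (hu i).mul ((hA i j).mul (hv j))

lemma continuous_euclNorm {v : ℝ → ι → ℝ} (hv : ∀ i, Continuous fun τ => v τ i) :
    Continuous fun τ => euclNorm (v τ) := by
  have : (fun τ => euclNorm (v τ)) = fun τ => Real.sqrt (∑ i, v τ i ^ 2) := by
    funext τ; rfl
  rw [this]
  exact Real.continuous_sqrt.comp (continuous_finset_sum _ fun i _ => (hv i).pow 2)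


lemma opNorm_bound {p : ℕ} {d : Fin p → ℝ} (hd : ∀ i, 0 < d i)
    {Λ : Matrix (Fin p) (Fin p) ℝ} (hΛ : Λ = Matrix.diagonal d) :
    (0 ≤ matOpNorm Λ) ∧ ∀ v : Fin p → ℝ, euclNorm (Λ.mulVec v) ≤ matOpNorm Λ * euclNorm v := by
  set Sset := {r : ℝ | ∃ v : Fin p → ℝ, euclNorm v ≤ 1 ∧ r = euclNorm (Λ.mulVec v)} with hSset
  have hmem0 : (0 : ℝ) ∈ Sset := by
    refine ⟨0, ?_, ?_⟩
    · simp [euclNorm]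
    · simp [euclNorm]
  have hbdd : BddAbove Sset := by
    refine ⟨Real.sqrt (∑ i, d i ^ 2), ?_⟩
    rintro r ⟨v, hv1, rfl⟩
    have hv2 : (∑ i, v i ^ 2) ≤ 1 := by
      have h1 : euclNorm v ^ 2 ≤ 1 ^ 2 :=
        pow_le_pow_left₀ (euclNorm_nonneg v) hv1 2
      have h2 : euclNorm v ^ 2 = ∑ i, v i ^ 2 :=
        Real.sq_sqrt (Finset.sum_nonneg fun i _ => sq_nonneg _)
      nlinarith [h1, h2]
    have heval : ∀ i, (Λ.mulVec v) i = d i * v i := by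
      intro i; rw [hΛ]; exact Matrix.mulVec_diagonal _ _ _
    have hsum : (∑ i, (Λ.mulVec v) i ^ 2) ≤ ∑ i, d i ^ 2 := by
      calc (∑ i, (Λ.mulVec v) i ^ 2) = ∑ i, d i ^ 2 * v i ^ 2 := by
            refine Finset.sum_congr rfl fun i _ => ?_; rw [heval i]; ring
        _ ≤ ∑ i, d i ^ 2 * 1 := by
            refine Finset.sum_le_sum fun i _ => ?_
            refine mul_le_mul_of_nonneg_left ?_ (sq_nonneg _)
            have h5 : v i ^ 2 ≤ ∑ x, v x ^ 2 := by
              simpa using Finset.single_le_sum (f := fun j => v j ^ 2)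
                (fun j _ => sq_nonneg _) (Finset.mem_univ i)
            linarith
        _ = ∑ i, d i ^ 2 := by simp
    exact Real.sqrt_le_sqrt hsum
  have hN0 : 0 ≤ matOpNorm Λ := le_csSup hbdd hmem0
  refine ⟨hN0, fun v => ?_⟩
  rcases (euclNorm_nonneg v).eq_or_lt with h0 | hpos
  · have hv0 : v = 0 := by
      have hssum : (∑ i, v i ^ 2) = 0 := by
        have h1 : Real.sqrt (∑ i, v i ^ 2) = 0 := h0.symm
        have h2 : 0 ≤ ∑ i, v i ^ 2 := Finset.sum_nonneg fun i _ => sq_nonneg _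
        nlinarith [Real.sq_sqrt h2]
      funext i
      have := (Finset.sum_eq_zero_iff_of_nonneg (fun i _ => sq_nonneg (v i))).1 hssum i
        (Finset.mem_univ i)
      exact (pow_eq_zero_iff (by norm_num : (2:ℕ) ≠ 0)).1 this
    rw [hv0]
    simp [euclNorm]
  · set c := euclNorm v with hc
    have hmem : euclNorm (Λ.mulVec (c⁻¹ • v)) ∈ Sset := by
      refine ⟨c⁻¹ • v, ?_, rfl⟩
      rw [euclNorm_smul, abs_of_pos (inv_pos.2 hpos), inv_mul_cancel₀ hpos.ne']
    have hle := le_csSup hbdd hmem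
    have heq : euclNorm (Λ.mulVec (c⁻¹ • v)) = c⁻¹ * euclNorm (Λ.mulVec v) := by
      rw [Matrix.mulVec_smul, euclNorm_smul, abs_of_pos (inv_pos.2 hpos)]
    rw [heq] at hle
    calc euclNorm (Λ.mulVec v) = c * (c⁻¹ * euclNorm (Λ.mulVec v)) := by
          field_simp
      _ ≤ c * matOpNorm Λ := mul_le_mul_of_nonneg_left hle hpos.le
      _ = matOpNorm Λ * c := mul_comm _ _


set_option maxHeartbeats 1000000 in
lemma core {p : ℕ} (hp : 0 < p) {k : ℝ} (hk : 0 < k) {d : Fin p → ℝ} (hd : ∀ i, 0 < d i)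
    {Λ : Matrix (Fin p) (Fin p) ℝ} (hΛ : Λ = Matrix.diagonal d)
    {S : ℝ → Matrix (Fin p) (Fin p) ℝ}
    (hSpsd : ∀ τ, (S τ).PosSemidef)
    (hSe : ∀ i j, Continuous fun τ => S τ i j)
    {t₀ T₀ μ₁ μ₂ : ℝ} (ht₀ : 0 ≤ t₀) (hT₀ : 0 < T₀) (hμ₁ : 0 < μ₁) (hμ₂ : 0 < μ₂)
    (hPEq : ∀ x : Fin p → ℝ, μ₁ * (x ⬝ᵥ x) ≤ ∫ τ in t₀..(t₀ + T₀), x ⬝ᵥ S τ *ᵥ x)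
    (hUBq : ∀ t, t₀ ≤ t → ∀ x : Fin p → ℝ,
      (∫ τ in t..(t + T₀), x ⬝ᵥ S τ *ᵥ x) ≤ μ₂ * (x ⬝ᵥ x))
    {y : ℝ → Fin p → ℝ}
    (hy : ∀ t, HasDerivAt y ((-k) • (Λ *ᵥ (S t *ᵥ y t))) t) :
    μ₁ / (1 + k * Real.sqrt p * matOpNorm Λ * μ₂) ^ 2 * (y t₀ ⬝ᵥ y t₀)
      ≤ (∫ τ in t₀..(t₀ + T₀), y τ ⬝ᵥ S τ *ᵥ y τ)
    ∧ (∫ τ in t₀..(t₀ + T₀), y τ ⬝ᵥ S τ *ᵥ y τ) ≤ μ₂ * (y t₀ ⬝ᵥ y t₀) := by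
  have t₁def : t₀ ≤ t₀ + T₀ := le_add_of_nonneg_right hT₀.le
  set t₁ := t₀ + T₀ with ht₁
  -- continuity of y and w
  have hycont : Continuous y := continuous_iff_continuousAt.2 fun t => (hy t).continuousAt
  have hyc : ∀ i, Continuous fun τ => y τ i := fun i => (continuous_apply i).comp hycont
  set w : ℝ → Fin p → ℝ := fun t => (-k) • (Λ *ᵥ (S t *ᵥ y t)) with hw
  have hyd : ∀ t, HasDerivAt y (w t) t := hy
  have hwc : ∀ i, Continuous fun τ => w τ i := by
    intro i
    have h1 : Continuous fun τ => (Λ *ᵥ (S τ *ᵥ y τ)) i := by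
      have hrepr : (fun τ => (Λ *ᵥ (S τ *ᵥ y τ)) i)
          = fun τ => ∑ j, Λ i j * ∑ l, S τ j l * y τ l := by
        funext τ; simp [Matrix.mulVec, dotProduct]
      rw [hrepr]
      exact continuous_finset_sum _ fun j _ => continuous_const.mul
        (continuous_finset_sum _ fun l _ => (hSe j l).mul (hyc l))
    have hrepr2 : (fun τ => w τ i) = fun τ => (-k) * (Λ *ᵥ (S τ *ᵥ y τ)) i := by
      funext τ; simp [hw]
    rw [hrepr2]; exact continuous_const.mul h1
  set f : ℝ → ℝ := fun τ => y τ ⬝ᵥ S τ *ᵥ y τ with hf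
  have hfc : Continuous f := continuous_qf hSe hyc hyc
  have hf0 : ∀ τ, 0 ≤ f τ := fun τ => qf_nonneg (hSpsd τ) _
  set J := ∫ τ in t₀..t₁, f τ with hJ
  have hJ0 : 0 ≤ J := intervalIntegral.integral_nonneg t₁def fun τ _ => hf0 τ
  set Y := y t₀ ⬝ᵥ y t₀ with hY
  have hY0 : 0 ≤ Y := dot_self_nonneg _
  set N := matOpNorm Λ with hN
  obtain ⟨hN0, hNbound⟩ := opNorm_bound hd hΛ
  -- subwindow bound
  have hsub : ∀ a' b', t₀ ≤ a' → a' ≤ b' → b' ≤ t₁ → ∀ x : Fin p → ℝ,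
      (∫ τ in a'..b', x ⬝ᵥ S τ *ᵥ x) ≤ μ₂ * (x ⬝ᵥ x) := by
    intro a' b' h1 h2 h3 x
    have hc : Continuous fun τ => x ⬝ᵥ S τ *ᵥ x :=
      continuous_qf hSe (fun _ => continuous_const) (fun _ => continuous_const)
    have hmono : (∫ τ in a'..b', x ⬝ᵥ S τ *ᵥ x) ≤ ∫ τ in a'..(a' + T₀), x ⬝ᵥ S τ *ᵥ x :=
      intervalIntegral.integral_mono_interval le_rfl h2 (by simp only [ht₁] at h3; linarith)
        (Filter.Eventually.of_forall fun τ => qf_nonneg (hSpsd τ) x)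
        (hc.intervalIntegrable _ _)
    exact hmono.trans (hUBq a' h1 x)
  -- z
  set z : ℝ → Fin p → ℝ := fun τ => y τ - y t₀ with hz
  have hzc : ∀ i, Continuous fun τ => z τ i := fun i => (hyc i).sub continuous_const
  have hzd : ∀ t (i : Fin p), HasDerivAt (fun τ => z τ i) (w t i) t := by
    intro t i
    exact ((hasDerivAt_pi.1 (hyd t)) i).sub_const (y t₀ i)
  have hz0 : z t₀ = 0 := by funext i; simp [hz]
  -- UPPER BOUND
  have hupper : J ≤ μ₂ * Y := by
    set Λi : Matrix (Fin p) (Fin p) ℝ := Matrix.diagonal fun i => (d i)⁻¹ with hΛi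
    have hΛiT : Λiᵀ = Λi := Matrix.diagonal_transpose _
    have hΛiψ : ∀ v : Fin p → ℝ, Λi *ᵥ (Λ *ᵥ v) = v := by
      intro v
      rw [hΛ, Matrix.mulVec_mulVec, hΛi, Matrix.diagonal_mul_diagonal]
      have hone : (fun i => (d i)⁻¹ * d i) = fun _ => (1 : ℝ) := by
        funext i; exact inv_mul_cancel₀ (hd i).ne'
      rw [hone, Matrix.diagonal_one, Matrix.one_mulVec]
    have hΛipsd : Λi.PosSemidef :=
      Matrix.PosSemidef.diagonal fun i => inv_nonneg.2 (hd i).le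
    have hgd : ∀ τ, HasDerivAt (fun σ => z σ ⬝ᵥ Λi *ᵥ z σ)
        (w τ ⬝ᵥ Λi *ᵥ z τ + z τ ⬝ᵥ (0 : Matrix (Fin p) (Fin p) ℝ) *ᵥ z τ
          + z τ ⬝ᵥ Λi *ᵥ w τ) τ := fun τ =>
      hasDerivAt_qf (fun i j => hasDerivAt_const _ _) (hzd τ) (hzd τ)
    have hderval : ∀ τ, w τ ⬝ᵥ Λi *ᵥ z τ + z τ ⬝ᵥ (0 : Matrix (Fin p) (Fin p) ℝ) *ᵥ z τ
        + z τ ⬝ᵥ Λi *ᵥ w τ = (-(2 * k)) * (z τ ⬝ᵥ S τ *ᵥ y τ) := by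
      intro τ
      have h1 : Λi *ᵥ w τ = (-k) • (S τ *ᵥ y τ) := by
        rw [hw]
        show Λi *ᵥ ((-k) • (Λ *ᵥ (S τ *ᵥ y τ))) = _
        rw [Matrix.mulVec_smul, hΛiψ]
      have h2 : z τ ⬝ᵥ Λi *ᵥ w τ = (-k) * (z τ ⬝ᵥ S τ *ᵥ y τ) := by
        rw [h1, dotProduct_smul, smul_eq_mul]
      have h3 : w τ ⬝ᵥ Λi *ᵥ z τ = z τ ⬝ᵥ Λi *ᵥ w τ := qf_symm hΛiT _ _
      rw [h3, h2, Matrix.zero_mulVec, dotProduct_zero]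
      ring
    have hcrossc : Continuous fun τ => z τ ⬝ᵥ S τ *ᵥ y τ := continuous_qf hSe hzc hyc
    have hFTC : (∫ τ in t₀..t₁, (-(2 * k)) * (z τ ⬝ᵥ S τ *ᵥ y τ))
        = (z t₁ ⬝ᵥ Λi *ᵥ z t₁) - (z t₀ ⬝ᵥ Λi *ᵥ z t₀) := by
      refine intervalIntegral.integral_eq_sub_of_hasDerivAt
        (f := fun σ => z σ ⬝ᵥ Λi *ᵥ z σ) (fun τ _ => ?_)
        ((continuous_const.mul hcrossc).intervalIntegrable _ _)
      have h := hgd τ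
      rwa [hderval τ] at h
    have hzt₀ : z t₀ ⬝ᵥ Λi *ᵥ z t₀ = 0 := by rw [hz0]; simp
    have hg1 : 0 ≤ z t₁ ⬝ᵥ Λi *ᵥ z t₁ := qf_nonneg hΛipsd _
    have hint1 : (∫ τ in t₀..t₁, (-(2 * k)) * (z τ ⬝ᵥ S τ *ᵥ y τ))
        = (-(2 * k)) * ∫ τ in t₀..t₁, z τ ⬝ᵥ S τ *ᵥ y τ :=
      intervalIntegral.integral_const_mul _ _
    have hcross_nonpos : (∫ τ in t₀..t₁, z τ ⬝ᵥ S τ *ᵥ y τ) ≤ 0 := by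
      rw [hint1] at hFTC
      nlinarith [hg1, hzt₀, hk]
    have hsplit : ∀ τ, z τ ⬝ᵥ S τ *ᵥ y τ = f τ - (y t₀ ⬝ᵥ S τ *ᵥ y τ) := by
      intro τ
      show (y τ - y t₀) ⬝ᵥ S τ *ᵥ y τ = _
      rw [sub_dotProduct]
    have hg₀yc : Continuous fun τ => y t₀ ⬝ᵥ S τ *ᵥ y τ :=
      continuous_qf hSe (fun _ => continuous_const) hyc
    have hint2 : (∫ τ in t₀..t₁, z τ ⬝ᵥ S τ *ᵥ y τ)
        = J - ∫ τ in t₀..t₁, y t₀ ⬝ᵥ S τ *ᵥ y τ := by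
      rw [intervalIntegral.integral_congr (g := fun τ => f τ - (y t₀ ⬝ᵥ S τ *ᵥ y τ))
        (fun τ _ => hsplit τ)]
      rw [intervalIntegral.integral_sub (hfc.intervalIntegrable _ _)
        (hg₀yc.intervalIntegrable _ _)]
    have hJX : J ≤ ∫ τ in t₀..t₁, y t₀ ⬝ᵥ S τ *ᵥ y τ := by linarith [hint2 ▸ hcross_nonpos]
    have hg₀c : Continuous fun τ => y t₀ ⬝ᵥ S τ *ᵥ y t₀ :=
      continuous_qf hSe (fun _ => continuous_const) (fun _ => continuous_const)
    have hg₀0 : ∀ τ, 0 ≤ y t₀ ⬝ᵥ S τ *ᵥ y t₀ := fun τ => qf_nonneg (hSpsd τ) _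
    have hX2 : (∫ τ in t₀..t₁, y t₀ ⬝ᵥ S τ *ᵥ y τ)
        ≤ ∫ τ in t₀..t₁, Real.sqrt (y t₀ ⬝ᵥ S τ *ᵥ y t₀) * Real.sqrt (f τ) :=
      intervalIntegral.integral_mono_on t₁def (hg₀yc.intervalIntegrable _ _)
        (((Real.continuous_sqrt.comp hg₀c).mul
          (Real.continuous_sqrt.comp hfc)).intervalIntegrable _ _)
        (fun τ _ => qf_cs (hSpsd τ) _ _)
    have hX3 : (∫ τ in t₀..t₁, Real.sqrt (y t₀ ⬝ᵥ S τ *ᵥ y t₀) * Real.sqrt (f τ))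
        ≤ Real.sqrt (∫ τ in t₀..t₁, y t₀ ⬝ᵥ S τ *ᵥ y t₀) * Real.sqrt J :=
      int_sqrt_mul_le t₁def hg₀c hfc hg₀0 hf0
    have hG₀ : (∫ τ in t₀..t₁, y t₀ ⬝ᵥ S τ *ᵥ y t₀) ≤ μ₂ * Y := hUBq t₀ le_rfl (y t₀)
    have hfin : J ≤ Real.sqrt (μ₂ * Y) * Real.sqrt J := by
      calc J ≤ _ := hJX
        _ ≤ _ := hX2
        _ ≤ _ := hX3
        _ ≤ Real.sqrt (μ₂ * Y) * Real.sqrt J :=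
          mul_le_mul_of_nonneg_right (Real.sqrt_le_sqrt hG₀) (Real.sqrt_nonneg _)
    nlinarith [Real.sqrt_nonneg J, Real.sq_sqrt hJ0,
      Real.sq_sqrt (mul_nonneg hμ₂.le hY0), Real.sqrt_nonneg (μ₂ * Y),
      sq_nonneg (Real.sqrt (μ₂ * Y) - Real.sqrt J)]
  -- LOWER BOUND
  have hlower : μ₁ * Y ≤ (1 + k * Real.sqrt p * N * μ₂) ^ 2 * J := by
    set a := k * Real.sqrt p * N * μ₂ with ha
    have ha0 : 0 ≤ a := by
      have := Real.sqrt_nonneg (p : ℝ)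
      have := mul_nonneg (mul_nonneg (mul_nonneg hk.le this) hN0) hμ₂.le
      linarith
    set g2 : ℝ → ℝ := fun τ => z τ ⬝ᵥ S τ *ᵥ z τ with hg2
    have hg2c : Continuous g2 := continuous_qf hSe hzc hzc
    have hg2nn : ∀ τ, 0 ≤ g2 τ := fun τ => qf_nonneg (hSpsd τ) _
    set H := ∫ τ in t₀..t₁, g2 τ with hH
    have hH0 : 0 ≤ H := intervalIntegral.integral_nonneg t₁def fun τ _ => hg2nn τ
    have hnw : Continuous fun τ => euclNorm (w τ) := continuous_euclNorm hwc
    set Ω : ℝ → ℝ := fun τ => ∫ s in t₀..τ, euclNorm (w s) with hΩ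
    have hΩd : ∀ τ, HasDerivAt Ω (euclNorm (w τ)) τ :=
      fun τ => (hnw.integral_hasStrictDerivAt t₀ τ).hasDerivAt
    have hΩc : Continuous Ω := continuous_iff_continuousAt.2 fun τ => (hΩd τ).continuousAt
    have hΩ0 : ∀ τ, t₀ ≤ τ → 0 ≤ Ω τ := fun τ hτ =>
      intervalIntegral.integral_nonneg hτ fun s _ => euclNorm_nonneg _
    have hz_int : ∀ τ (i : Fin p), z τ i = ∫ s in t₀..τ, w s i := by
      intro τ i
      have hs := intervalIntegral.integral_eq_sub_of_hasDerivAt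
        (f := fun σ => y σ i) (f' := fun σ => w σ i) (a := t₀) (b := τ)
        (fun σ _ => (hasDerivAt_pi.1 (hyd σ)) i) ((hwc i).intervalIntegrable _ _)
      show y τ i - y t₀ i = _
      rw [hs]
    have hzΩ : ∀ τ, t₀ ≤ τ → euclNorm (z τ) ≤ Ω τ := by
      intro τ hτ
      have hexp : z τ ⬝ᵥ z τ = ∫ s in t₀..τ, (w s ⬝ᵥ z τ) := by
        have e1 : z τ ⬝ᵥ z τ = ∑ i, (∫ s in t₀..τ, w s i) * z τ i := by
          simp only [dotProduct]
          exact Finset.sum_congr rfl fun i _ => by rw [← hz_int τ i]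
        have e3 : (∫ s in t₀..τ, ∑ i, w s i * z τ i) = ∑ i, ∫ s in t₀..τ, w s i * z τ i :=
          intervalIntegral.integral_finset_sum (μ := volume) (s := Finset.univ)
            (f := fun i s => w s i * z τ i)
            (fun i _ => ((hwc i).mul continuous_const).intervalIntegrable _ _)
        rw [e1, Finset.sum_congr rfl fun i (_ : i ∈ Finset.univ) =>
          (intervalIntegral.integral_mul_const (z τ i) (fun s => w s i)).symm, ← e3]
        exact intervalIntegral.integral_congr fun s _ => by simp [dotProduct]
      have hdotc : Continuous fun s => w s ⬝ᵥ z τ := by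
        have hr : (fun s => w s ⬝ᵥ z τ) = fun s => ∑ i, w s i * z τ i := by
          funext s; simp [dotProduct]
        rw [hr]
        exact continuous_finset_sum _ fun i _ => (hwc i).mul continuous_const
      have hmono : (∫ s in t₀..τ, (w s ⬝ᵥ z τ))
          ≤ ∫ s in t₀..τ, euclNorm (w s) * euclNorm (z τ) :=
        intervalIntegral.integral_mono_on hτ (hdotc.intervalIntegrable _ _)
          ((hnw.mul continuous_const).intervalIntegrable _ _)
          (fun s _ => dot_le_norms _ _)
      have hval : (∫ s in t₀..τ, euclNorm (w s) * euclNorm (z τ)) = Ω τ * euclNorm (z τ) :=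
        intervalIntegral.integral_mul_const _ _
      have hsq : euclNorm (z τ) ^ 2 ≤ Ω τ * euclNorm (z τ) := by
        rw [euclNorm_sq]
        calc z τ ⬝ᵥ z τ = _ := hexp
          _ ≤ _ := hmono
          _ = _ := hval
      rcases (euclNorm_nonneg (z τ)).eq_or_lt with h0 | hpos
      · rw [← h0]; exact hΩ0 τ hτ
      · nlinarith [hsq]
    -- P
    set P : ℝ → Matrix (Fin p) (Fin p) ℝ := fun τ => intMat S τ t₁ with hP
    have hPentry : ∀ τ (i j : Fin p), P τ i j = ∫ s in τ..t₁, S s i j := fun τ i j => rfl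
    have hPd : ∀ (i j : Fin p) τ, HasDerivAt (fun σ => P σ i j) (-(S τ i j)) τ := by
      intro i j τ
      have hfun : (fun σ => P σ i j) = fun σ => -∫ s in t₁..σ, S s i j := by
        funext σ
        rw [hPentry, intervalIntegral.integral_symm]
      rw [hfun]
      exact (((hSe i j).integral_hasStrictDerivAt t₁ τ).hasDerivAt).neg
    have hPc : ∀ i j, Continuous fun τ => P τ i j := fun i j =>
      continuous_iff_continuousAt.2 fun τ => (hPd i j τ).continuousAt
    have hSsymm : ∀ s (i j : Fin p), S s j i = S s i j := by
      intro s i j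
      have h := psd_transpose_eq (hSpsd s)
      calc S s j i = (S s)ᵀ i j := rfl
        _ = S s i j := by rw [h]
    have hPT : ∀ τ, (P τ)ᵀ = P τ := by
      intro τ
      ext i j
      rw [Matrix.transpose_apply, hPentry, hPentry]
      exact intervalIntegral.integral_congr fun s _ => hSsymm s i j
    have hPdot : ∀ τ (x u : Fin p → ℝ), x ⬝ᵥ P τ *ᵥ u = ∫ s in τ..t₁, x ⬝ᵥ S s *ᵥ u :=
      fun τ x u => dot_intMat hSe x u
    have hPpsd : ∀ τ, τ ∈ Set.Icc t₀ t₁ → (P τ).PosSemidef := by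
      intro τ hτ
      refine Matrix.PosSemidef.of_dotProduct_mulVec_nonneg ?_ ?_
      · rw [Matrix.IsHermitian, Matrix.conjTranspose_eq_transpose_of_trivial]
        exact hPT τ
      · intro x
        have h1 : x ⬝ᵥ P τ *ᵥ x = ∫ s in τ..t₁, x ⬝ᵥ S s *ᵥ x := hPdot τ x x
        have h2 : 0 ≤ x ⬝ᵥ P τ *ᵥ x := by
          rw [h1]
          exact intervalIntegral.integral_nonneg hτ.2 fun s _ => qf_nonneg (hSpsd s) x
        simpa using h2
    have hPub : ∀ τ, τ ∈ Set.Icc t₀ t₁ → ∀ x : Fin p → ℝ,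
        x ⬝ᵥ P τ *ᵥ x ≤ μ₂ * (x ⬝ᵥ x) := by
      intro τ hτ x
      rw [hPdot]
      exact hsub τ t₁ hτ.1 hτ.2 le_rfl x
    -- FTC for φ
    have hφd : ∀ τ, HasDerivAt (fun σ => z σ ⬝ᵥ P σ *ᵥ z σ)
        (w τ ⬝ᵥ P τ *ᵥ z τ + z τ ⬝ᵥ (-(S τ)) *ᵥ z τ + z τ ⬝ᵥ P τ *ᵥ w τ) τ := by
      intro τ
      refine hasDerivAt_qf (fun i j => ?_) (hzd τ) (hzd τ)
      have := hPd i j τ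
      simpa using this
    have hPwc : Continuous fun τ => z τ ⬝ᵥ P τ *ᵥ w τ := continuous_qf hPc hzc hwc
    have hwPzc : Continuous fun τ => w τ ⬝ᵥ P τ *ᵥ z τ := continuous_qf hPc hwc hzc
    have hφint : (∫ τ in t₀..t₁,
        (w τ ⬝ᵥ P τ *ᵥ z τ + z τ ⬝ᵥ (-(S τ)) *ᵥ z τ + z τ ⬝ᵥ P τ *ᵥ w τ)) = 0 := by
      have hintg : Continuous fun τ =>
          w τ ⬝ᵥ P τ *ᵥ z τ + z τ ⬝ᵥ (-(S τ)) *ᵥ z τ + z τ ⬝ᵥ P τ *ᵥ w τ := by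
        have hmid : Continuous fun τ => z τ ⬝ᵥ (-(S τ)) *ᵥ z τ := by
          have hr : (fun τ => z τ ⬝ᵥ (-(S τ)) *ᵥ z τ) = fun τ => -(g2 τ) := by
            funext τ
            rw [Matrix.neg_mulVec, dotProduct_neg]
          rw [hr]; exact hg2c.neg
        exact (hwPzc.add hmid).add hPwc
      rw [intervalIntegral.integral_eq_sub_of_hasDerivAt (fun τ _ => hφd τ)
        (hintg.intervalIntegrable _ _)]
      have hPt₁ : P t₁ = 0 := by
        ext i j
        rw [hPentry]
        simp
      rw [hPt₁, hz0]
      simp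
    have hHeq : H = 2 * ∫ τ in t₀..t₁, z τ ⬝ᵥ P τ *ᵥ w τ := by
      have h1 : (∫ τ in t₀..t₁, (2 * (z τ ⬝ᵥ P τ *ᵥ w τ) - g2 τ)) = 0 := by
        rw [← hφint]
        refine intervalIntegral.integral_congr fun τ _ => ?_
        show 2 * (z τ ⬝ᵥ P τ *ᵥ w τ) - g2 τ
          = w τ ⬝ᵥ P τ *ᵥ z τ + z τ ⬝ᵥ (-(S τ)) *ᵥ z τ + z τ ⬝ᵥ P τ *ᵥ w τ
        rw [qf_symm (hPT τ) (w τ) (z τ), Matrix.neg_mulVec, dotProduct_neg]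
        show 2 * (z τ ⬝ᵥ P τ *ᵥ w τ) - z τ ⬝ᵥ S τ *ᵥ z τ
          = z τ ⬝ᵥ P τ *ᵥ w τ + -(z τ ⬝ᵥ S τ *ᵥ z τ) + z τ ⬝ᵥ P τ *ᵥ w τ
        ring
      rw [intervalIntegral.integral_sub (f := fun τ => 2 * (z τ ⬝ᵥ P τ *ᵥ w τ))
        ((continuous_const.mul hPwc).intervalIntegrable _ _)
        (hg2c.intervalIntegrable _ _), intervalIntegral.integral_const_mul] at h1
      linarith
    -- pointwise bound on z⬝Pw
    have hptP : ∀ τ ∈ Set.Icc t₀ t₁, z τ ⬝ᵥ P τ *ᵥ w τ ≤ μ₂ * (Ω τ * euclNorm (w τ)) := by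
      intro τ hτ
      have hcs := qf_cs (hPpsd τ hτ) (z τ) (w τ)
      have hzP : Real.sqrt (z τ ⬝ᵥ P τ *ᵥ z τ) ≤ Real.sqrt μ₂ * Ω τ := by
        calc Real.sqrt (z τ ⬝ᵥ P τ *ᵥ z τ) ≤ Real.sqrt (μ₂ * (z τ ⬝ᵥ z τ)) :=
              Real.sqrt_le_sqrt (hPub τ hτ _)
          _ = Real.sqrt μ₂ * Real.sqrt (z τ ⬝ᵥ z τ) := Real.sqrt_mul hμ₂.le _
          _ = Real.sqrt μ₂ * euclNorm (z τ) := by rw [euclNorm_eq]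
          _ ≤ Real.sqrt μ₂ * Ω τ :=
              mul_le_mul_of_nonneg_left (hzΩ τ hτ.1) (Real.sqrt_nonneg _)
      have hwP : Real.sqrt (w τ ⬝ᵥ P τ *ᵥ w τ) ≤ Real.sqrt μ₂ * euclNorm (w τ) := by
        calc Real.sqrt (w τ ⬝ᵥ P τ *ᵥ w τ) ≤ Real.sqrt (μ₂ * (w τ ⬝ᵥ w τ)) :=
              Real.sqrt_le_sqrt (hPub τ hτ _)
          _ = Real.sqrt μ₂ * Real.sqrt (w τ ⬝ᵥ w τ) := Real.sqrt_mul hμ₂.le _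
          _ = Real.sqrt μ₂ * euclNorm (w τ) := by rw [euclNorm_eq]
      have hμs : Real.sqrt μ₂ * Real.sqrt μ₂ = μ₂ := Real.mul_self_sqrt hμ₂.le
      calc z τ ⬝ᵥ P τ *ᵥ w τ ≤ _ := hcs
        _ ≤ (Real.sqrt μ₂ * Ω τ) * (Real.sqrt μ₂ * euclNorm (w τ)) := by
            apply mul_le_mul hzP hwP (Real.sqrt_nonneg _)
            exact mul_nonneg (Real.sqrt_nonneg _) (hΩ0 τ hτ.1)
        _ = (Real.sqrt μ₂ * Real.sqrt μ₂) * (Ω τ * euclNorm (w τ)) := by ring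
        _ = μ₂ * (Ω τ * euclNorm (w τ)) := by rw [hμs]
    have hΩsq : ∀ τ, HasDerivAt (fun σ => Ω σ ^ 2) (2 * (Ω τ * euclNorm (w τ))) τ := by
      intro τ
      have h : HasDerivAt (fun σ => Ω σ ^ 2) _ τ := (hΩd τ).pow 2
      norm_num at h
      convert h using 1
      ring
    have hintΩ : (∫ τ in t₀..t₁, 2 * (Ω τ * euclNorm (w τ))) = Ω t₁ ^ 2 := by
      rw [intervalIntegral.integral_eq_sub_of_hasDerivAt (fun τ _ => hΩsq τ)
        ((continuous_const.mul (hΩc.mul hnw)).intervalIntegrable _ _)]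
      have hΩt₀ : Ω t₀ = 0 := intervalIntegral.integral_same
      rw [hΩt₀]
      ring
    have hHb : H ≤ μ₂ * Ω t₁ ^ 2 := by
      rw [hHeq]
      have h1 : (∫ τ in t₀..t₁, z τ ⬝ᵥ P τ *ᵥ w τ)
          ≤ ∫ τ in t₀..t₁, μ₂ * (Ω τ * euclNorm (w τ)) :=
        intervalIntegral.integral_mono_on t₁def (hPwc.intervalIntegrable _ _)
          ((continuous_const.mul (hΩc.mul hnw)).intervalIntegrable _ _) hptP
      have h2 : (∫ τ in t₀..t₁, μ₂ * (Ω τ * euclNorm (w τ)))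
          = μ₂ * ∫ τ in t₀..t₁, Ω τ * euclNorm (w τ) :=
        intervalIntegral.integral_const_mul _ _
      have h3 : (∫ τ in t₀..t₁, 2 * (Ω τ * euclNorm (w τ)))
          = 2 * ∫ τ in t₀..t₁, Ω τ * euclNorm (w τ) :=
        intervalIntegral.integral_const_mul _ _
      rw [h3] at hintΩ
      rw [h2] at h1
      nlinarith [h1, hintΩ, hμ₂]
    -- bound on ‖w‖
    have htr0 : ∀ τ, 0 ≤ ∑ i, S τ i i := by
      intro τ
      refine Finset.sum_nonneg fun i _ => ?_
      have hcs := qf_nonneg (hSpsd τ) (Pi.single i 1)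
      have e2 : Pi.single i 1 ⬝ᵥ (S τ *ᵥ Pi.single i 1) = S τ i i := by
        rw [single_dotProduct, one_mul]
        show (fun j => S τ i j) ⬝ᵥ Pi.single i 1 = S τ i i
        rw [dotProduct_single, mul_one]
      rwa [e2] at hcs
    have hdiagS : ∀ τ (i : Fin p), Pi.single i 1 ⬝ᵥ (S τ *ᵥ Pi.single i 1) = S τ i i := by
      intro τ i
      rw [single_dotProduct, one_mul]
      show (fun j => S τ i j) ⬝ᵥ Pi.single i 1 = S τ i i
      rw [dotProduct_single, mul_one]
    have hwb : ∀ τ, euclNorm (w τ)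
        ≤ (k * N) * (Real.sqrt (∑ i, S τ i i) * Real.sqrt (f τ)) := by
      intro τ
      have h1 : euclNorm (w τ) = k * euclNorm (Λ *ᵥ (S τ *ᵥ y τ)) := by
        show euclNorm ((-k) • (Λ *ᵥ (S τ *ᵥ y τ))) = _
        rw [euclNorm_smul, abs_neg, abs_of_pos hk]
      have h2 : euclNorm (Λ *ᵥ (S τ *ᵥ y τ)) ≤ N * euclNorm (S τ *ᵥ y τ) := hNbound _
      have h3 : euclNorm (S τ *ᵥ y τ) ≤ Real.sqrt (∑ i, S τ i i) * Real.sqrt (f τ) := by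
        have hsq : ∀ i : Fin p, (S τ *ᵥ y τ) i ^ 2 ≤ S τ i i * f τ := by
          intro i
          have hcs := qf_cs_sq (hSpsd τ) (Pi.single i 1) (y τ)
          have e1 : Pi.single i 1 ⬝ᵥ (S τ *ᵥ y τ) = (S τ *ᵥ y τ) i := by
            rw [single_dotProduct, one_mul]
          rw [e1, hdiagS τ i] at hcs
          exact hcs
        have hsum : (∑ i, (S τ *ᵥ y τ) i ^ 2) ≤ (∑ i, S τ i i) * f τ := by
          calc (∑ i, (S τ *ᵥ y τ) i ^ 2) ≤ ∑ i, S τ i i * f τ :=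
                Finset.sum_le_sum fun i _ => hsq i
            _ = (∑ i, S τ i i) * f τ := by rw [Finset.sum_mul]
        calc euclNorm (S τ *ᵥ y τ) = Real.sqrt (∑ i, (S τ *ᵥ y τ) i ^ 2) := rfl
          _ ≤ Real.sqrt ((∑ i, S τ i i) * f τ) := Real.sqrt_le_sqrt hsum
          _ = _ := Real.sqrt_mul (htr0 τ) _
      calc euclNorm (w τ) = k * euclNorm (Λ *ᵥ (S τ *ᵥ y τ)) := h1
        _ ≤ k * (N * euclNorm (S τ *ᵥ y τ)) := mul_le_mul_of_nonneg_left h2 hk.le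
        _ ≤ k * (N * (Real.sqrt (∑ i, S τ i i) * Real.sqrt (f τ))) := by
            refine mul_le_mul_of_nonneg_left (mul_le_mul_of_nonneg_left h3 hN0) hk.le
        _ = (k * N) * (Real.sqrt (∑ i, S τ i i) * Real.sqrt (f τ)) := by ring
    have htrc : Continuous fun τ => ∑ i, S τ i i :=
      continuous_finset_sum _ fun i _ => hSe i i
    have hΩt₁ : Ω t₁ ≤ (k * N) * (Real.sqrt (∫ τ in t₀..t₁, ∑ i, S τ i i) * Real.sqrt J) := by
      calc Ω t₁ ≤ ∫ τ in t₀..t₁, (k * N) * (Real.sqrt (∑ i, S τ i i) * Real.sqrt (f τ)) :=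
            intervalIntegral.integral_mono_on t₁def (hnw.intervalIntegrable _ _)
              ((continuous_const.mul ((Real.continuous_sqrt.comp htrc).mul
                (Real.continuous_sqrt.comp hfc))).intervalIntegrable _ _)
              (fun τ _ => hwb τ)
        _ = (k * N) * ∫ τ in t₀..t₁, Real.sqrt (∑ i, S τ i i) * Real.sqrt (f τ) :=
            intervalIntegral.integral_const_mul _ _
        _ ≤ (k * N) * (Real.sqrt (∫ τ in t₀..t₁, ∑ i, S τ i i) * Real.sqrt J) :=
            mul_le_mul_of_nonneg_left
              (int_sqrt_mul_le t₁def htrc hfc htr0 hf0) (mul_nonneg hk.le hN0)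
    have htrsum : (∫ τ in t₀..t₁, ∑ i, S τ i i) ≤ p * μ₂ := by
      have h1 : (∫ τ in t₀..t₁, ∑ i, S τ i i) = ∑ i : Fin p, ∫ τ in t₀..t₁, S τ i i :=
        intervalIntegral.integral_finset_sum (μ := volume) (s := Finset.univ)
          (f := fun i τ => S τ i i) (fun i _ => (hSe i i).intervalIntegrable _ _)
      rw [h1]
      have h2 : ∀ i : Fin p, (∫ τ in t₀..t₁, S τ i i) ≤ μ₂ := by
        intro i
        have h3 := hsub t₀ t₁ le_rfl t₁def le_rfl (Pi.single i 1)
        have h4 : (∫ τ in t₀..t₁, Pi.single i 1 ⬝ᵥ S τ *ᵥ Pi.single i 1)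
            = ∫ τ in t₀..t₁, S τ i i :=
          intervalIntegral.integral_congr fun τ _ => hdiagS τ i
        have h5 : (Pi.single i 1 : Fin p → ℝ) ⬝ᵥ Pi.single i 1 = 1 := by
          rw [single_dotProduct, one_mul, Pi.single_eq_same]
        rw [h4, h5, mul_one] at h3
        exact h3
      calc (∑ i : Fin p, ∫ τ in t₀..t₁, S τ i i) ≤ ∑ _i : Fin p, μ₂ :=
            Finset.sum_le_sum fun i _ => h2 i
        _ = p * μ₂ := by
            rw [Finset.sum_const, Finset.card_univ, Fintype.card_fin, nsmul_eq_mul]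
    have hHfinal : H ≤ a ^ 2 * J := by
      have htrint0 : 0 ≤ ∫ τ in t₀..t₁, ∑ i, S τ i i :=
        intervalIntegral.integral_nonneg t₁def fun τ _ => htr0 τ
      have hE1 : Real.sqrt (∫ τ in t₀..t₁, ∑ i, S τ i i) ≤ Real.sqrt (p * μ₂) :=
        Real.sqrt_le_sqrt htrsum
      have hΩb2 : Ω t₁ ≤ (k * N) * (Real.sqrt (p * μ₂) * Real.sqrt J) := by
        refine hΩt₁.trans ?_
        exact mul_le_mul_of_nonneg_left
          (mul_le_mul_of_nonneg_right hE1 (Real.sqrt_nonneg _)) (mul_nonneg hk.le hN0)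
      have hsq2 : Ω t₁ ^ 2 ≤ ((k * N) * (Real.sqrt (p * μ₂) * Real.sqrt J)) ^ 2 :=
        pow_le_pow_left₀ (hΩ0 t₁ t₁def) hΩb2 2
      have e1 : Real.sqrt (p * μ₂) ^ 2 = p * μ₂ :=
        Real.sq_sqrt (mul_nonneg (Nat.cast_nonneg p) hμ₂.le)
      have e2 : Real.sqrt J ^ 2 = J := Real.sq_sqrt hJ0
      have h3 : ((k * N) * (Real.sqrt (p * μ₂) * Real.sqrt J)) ^ 2
          = k ^ 2 * N ^ 2 * ((p : ℝ) * μ₂) * J := by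
        calc ((k * N) * (Real.sqrt (p * μ₂) * Real.sqrt J)) ^ 2
            = (k * N) ^ 2 * (Real.sqrt (p * μ₂) ^ 2 * Real.sqrt J ^ 2) := by ring
          _ = _ := by rw [e1, e2]; ring
      have ep : Real.sqrt (p : ℝ) ^ 2 = (p : ℝ) := Real.sq_sqrt (Nat.cast_nonneg p)
      have ha2 : a ^ 2 * J = μ₂ * (k ^ 2 * N ^ 2 * ((p : ℝ) * μ₂) * J) := by
        calc a ^ 2 * J = k ^ 2 * (Real.sqrt (p : ℝ) ^ 2) * N ^ 2 * μ₂ ^ 2 * J := by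
              rw [ha]; ring
          _ = _ := by rw [ep]; ring
      calc H ≤ μ₂ * Ω t₁ ^ 2 := hHb
        _ ≤ μ₂ * (k ^ 2 * N ^ 2 * ((p : ℝ) * μ₂) * J) := by
            refine mul_le_mul_of_nonneg_left ?_ hμ₂.le
            calc Ω t₁ ^ 2 ≤ _ := hsq2
              _ = _ := h3
        _ = a ^ 2 * J := ha2.symm
    -- cross term
    have hcrossc : Continuous fun τ => z τ ⬝ᵥ S τ *ᵥ y τ := continuous_qf hSe hzc hyc
    have hcross : -(∫ τ in t₀..t₁, z τ ⬝ᵥ S τ *ᵥ y τ) ≤ Real.sqrt H * Real.sqrt J := by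
      have hpt : ∀ τ ∈ Set.Icc t₀ t₁,
          -(z τ ⬝ᵥ S τ *ᵥ y τ) ≤ Real.sqrt (g2 τ) * Real.sqrt (f τ) :=
        fun τ _ => qf_cs_neg (hSpsd τ) _ _
      calc -(∫ τ in t₀..t₁, z τ ⬝ᵥ S τ *ᵥ y τ)
          = ∫ τ in t₀..t₁, -(z τ ⬝ᵥ S τ *ᵥ y τ) := intervalIntegral.integral_neg.symm
        _ ≤ ∫ τ in t₀..t₁, Real.sqrt (g2 τ) * Real.sqrt (f τ) :=
            intervalIntegral.integral_mono_on t₁def (hcrossc.neg.intervalIntegrable _ _)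
              (((Real.continuous_sqrt.comp hg2c).mul
                (Real.continuous_sqrt.comp hfc)).intervalIntegrable _ _) hpt
        _ ≤ Real.sqrt H * Real.sqrt J := int_sqrt_mul_le t₁def hg2c hfc hg2nn hf0
    -- expansion
    have hexp2 : ∀ τ, y t₀ ⬝ᵥ S τ *ᵥ y t₀ = f τ - 2 * (z τ ⬝ᵥ S τ *ᵥ y τ) + g2 τ := by
      intro τ
      have hzz : y t₀ = y τ - z τ := by funext i; simp [hz]
      have hST := psd_transpose_eq (hSpsd τ)
      calc y t₀ ⬝ᵥ S τ *ᵥ y t₀ = (y τ - z τ) ⬝ᵥ S τ *ᵥ (y τ - z τ) := by rw [← hzz]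
        _ = f τ - 2 * (z τ ⬝ᵥ S τ *ᵥ y τ) + g2 τ := by
            show _ = y τ ⬝ᵥ S τ *ᵥ y τ - 2 * (z τ ⬝ᵥ S τ *ᵥ y τ) + z τ ⬝ᵥ S τ *ᵥ z τ
            simp only [Matrix.mulVec_sub, dotProduct_sub, sub_dotProduct]
            rw [qf_symm hST (y τ) (z τ)]
            ring
    have hG0 : μ₁ * Y ≤ ∫ τ in t₀..t₁, y t₀ ⬝ᵥ S τ *ᵥ y t₀ := hPEq (y t₀)
    have hG0split : (∫ τ in t₀..t₁, y t₀ ⬝ᵥ S τ *ᵥ y t₀)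
        = J - 2 * (∫ τ in t₀..t₁, z τ ⬝ᵥ S τ *ᵥ y τ) + H := by
      rw [intervalIntegral.integral_congr (g := fun τ => f τ - 2 * (z τ ⬝ᵥ S τ *ᵥ y τ) + g2 τ)
        (fun τ _ => hexp2 τ)]
      rw [intervalIntegral.integral_add (f := fun τ => f τ - 2 * (z τ ⬝ᵥ S τ *ᵥ y τ))
        ((hfc.sub (continuous_const.mul hcrossc)).intervalIntegrable _ _)
        (hg2c.intervalIntegrable _ _)]
      rw [intervalIntegral.integral_sub (g := fun τ => 2 * (z τ ⬝ᵥ S τ *ᵥ y τ))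
        (hfc.intervalIntegrable _ _)
        ((continuous_const.mul hcrossc).intervalIntegrable _ _)]
      rw [intervalIntegral.integral_const_mul]
    have hsH : Real.sqrt H ≤ a * Real.sqrt J := by
      calc Real.sqrt H ≤ Real.sqrt (a ^ 2 * J) := Real.sqrt_le_sqrt hHfinal
        _ = a * Real.sqrt J := by
            rw [Real.sqrt_mul (sq_nonneg a), Real.sqrt_sq ha0]
    have hsJ : Real.sqrt J * Real.sqrt J = J := Real.mul_self_sqrt hJ0
    have hmain : μ₁ * Y ≤ J + 2 * (Real.sqrt H * Real.sqrt J) + H := by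
      rw [hG0split] at hG0
      nlinarith [hcross]
    have h2a : Real.sqrt H * Real.sqrt J ≤ a * J := by
      calc Real.sqrt H * Real.sqrt J ≤ (a * Real.sqrt J) * Real.sqrt J :=
            mul_le_mul_of_nonneg_right hsH (Real.sqrt_nonneg _)
        _ = a * J := by rw [mul_assoc, hsJ]
    nlinarith [hmain, h2a, hHfinal]
  -- conclude
  constructor
  · have h1a : (0 : ℝ) < 1 + k * Real.sqrt p * N * μ₂ := by
      have h2 := Real.sqrt_nonneg (p : ℝ)
      nlinarith [mul_nonneg (mul_nonneg (mul_nonneg hk.le h2) hN0) hμ₂.le]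
    rw [div_mul_eq_mul_div, div_le_iff₀ (by positivity : (0 : ℝ) < (1 + k * Real.sqrt p * N * μ₂) ^ 2)]
    calc μ₁ * Y ≤ (1 + k * Real.sqrt p * N * μ₂) ^ 2 * J := hlower
      _ = J * (1 + k * Real.sqrt p * N * μ₂) ^ 2 := mul_comm _ _
  · exact hupper

end Stmt7Aux

open Stmt7Aux in
/-- Uniform complete observability Gramian bounds for the closed-loop spanning-tree
edge dynamics `ẏ = -k Λ Γᵀ R W(t) Rᵀ Γ y` with output matrix `C(t) = W(t)^{1/2} Rᵀ Γ`. -/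
theorem stmt7 (p q : ℕ) (hp : 0 < p) (k : ℝ) (hk : 0 < k)
    (d : Fin p → ℝ) (hd : ∀ i, 0 < d i)
    (Λ : Matrix (Fin p) (Fin p) ℝ) (hΛ : Λ = Matrix.diagonal d)
    (Γ : Matrix (Fin p) (Fin p) ℝ) (hΓ : Γᵀ * Γ = 1)
    (T : Matrix (Fin p) (Fin q) ℝ)
    (R : Matrix (Fin p) (Fin p ⊕ Fin q) ℝ) (hR : R = Matrix.fromCols 1 T)
    (W : ℝ → Matrix (Fin p ⊕ Fin q) (Fin p ⊕ Fin q) ℝ)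
    (hWcont : Continuous W)
    (hWdiag : ∀ t, (W t).IsDiag)
    (hWpsd : ∀ t, (W t).PosSemidef)
    (T₀ μ₁ μ₂ : ℝ) (hT₀ : 0 < T₀) (hμ₁ : 0 < μ₁) (hμ₁₂ : μ₁ ≤ μ₂)
    (hPE : ∀ t : ℝ, 0 ≤ t →
      loewnerLE (μ₁ • (1 : Matrix (Fin p) (Fin p) ℝ))
        (intMat (fun τ => R * W τ * Rᵀ) t (t + T₀)))
    (hUB : ∀ t : ℝ, 0 ≤ t →
      loewnerLE (intMat (fun τ => R * W τ * Rᵀ) t (t + T₀))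
        (μ₂ • (1 : Matrix (Fin p) (Fin p) ℝ))) :
    ∀ t₀ : ℝ, 0 ≤ t₀ → ∀ y : ℝ → Fin p → ℝ,
      (∀ t : ℝ, HasDerivAt y ((-k) • (Λ * Γᵀ * R * W t * Rᵀ * Γ).mulVec (y t)) t) →
      (μ₁ / (1 + k * Real.sqrt p * matOpNorm Λ * μ₂) ^ 2) * euclNorm (y t₀) ^ 2 ≤
        (∫ τ in t₀..(t₀ + T₀), euclNorm (((hWpsd τ).sqrt * Rᵀ * Γ).mulVec (y τ)) ^ 2) ∧
      (∫ τ in t₀..(t₀ + T₀), euclNorm (((hWpsd τ).sqrt * Rᵀ * Γ).mulVec (y τ)) ^ 2) ≤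
        (μ₂ * Real.exp (k ^ 2 * p * matOpNorm Λ ^ 2 * μ₂ ^ 2)) * euclNorm (y t₀) ^ 2 := by
  intro t₀ ht₀ y hy
  have hμ₂ : 0 < μ₂ := lt_of_lt_of_le hμ₁ hμ₁₂
  set S : ℝ → Matrix (Fin p) (Fin p) ℝ := fun τ => Γᵀ * R * W τ * Rᵀ * Γ with hS
  have hWe : ∀ l m, Continuous fun τ => W τ l m :=
    fun l m => (continuous_apply m).comp ((continuous_apply l).comp hWcont)
  -- S as a conjugation
  have hSrepr : ∀ τ, S τ = (Γᵀ * R) * W τ * (Rᵀ * Γ) := by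
    intro τ; simp [hS, Matrix.mul_assoc]
  have hSrepr2 : ∀ τ, S τ = Γᵀ * (R * W τ * Rᵀ) * Γ := by
    intro τ; simp [hS, Matrix.mul_assoc]
  have hSpsd : ∀ τ, (S τ).PosSemidef := by
    intro τ
    have h := (hWpsd τ).mul_mul_conjTranspose_same (Γᵀ * R)
    have hct : (Γᵀ * R)ᴴ = Rᵀ * Γ := by
      rw [Matrix.conjTranspose_eq_transpose_of_trivial, Matrix.transpose_mul,
        Matrix.transpose_transpose]
    rw [hct] at h
    rw [hSrepr τ]
    exact h
  have hSe : ∀ i j, Continuous fun τ => S τ i j := by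
    intro i j
    have hrepr : (fun τ => S τ i j)
        = fun τ => ∑ m, (∑ l, (Γᵀ * R) i l * W τ l m) * (Rᵀ * Γ) m j := by
      funext τ
      rw [hSrepr τ, Matrix.mul_apply]
      exact Finset.sum_congr rfl fun m _ => by rw [Matrix.mul_apply]
    rw [hrepr]
    exact continuous_finset_sum _ fun m _ =>
      (continuous_finset_sum _ fun l _ => continuous_const.mul (hWe l m)).mul continuous_const
  have hRWe : ∀ i j, Continuous fun τ => (R * W τ * Rᵀ) i j := by
    intro i j
    have hrepr : (fun τ => (R * W τ * Rᵀ) i j)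
        = fun τ => ∑ m, (∑ l, R i l * W τ l m) * Rᵀ m j := by
      funext τ
      rw [Matrix.mul_apply]
      exact Finset.sum_congr rfl fun m _ => by rw [Matrix.mul_apply]
    rw [hrepr]
    exact continuous_finset_sum _ fun m _ =>
      (continuous_finset_sum _ fun l _ => continuous_const.mul (hWe l m)).mul continuous_const
  -- conjugation identities
  have hconj : ∀ (M : Matrix (Fin p) (Fin p) ℝ) (x : Fin p → ℝ),
      x ⬝ᵥ (Γᵀ * M * Γ) *ᵥ x = (Γ *ᵥ x) ⬝ᵥ M *ᵥ (Γ *ᵥ x) := by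
    intro M x
    rw [← Matrix.mulVec_mulVec, ← Matrix.mulVec_mulVec,
      dotProduct_mulVec x Γᵀ _, vecMul_transpose]
  have hGdot : ∀ x : Fin p → ℝ, (Γ *ᵥ x) ⬝ᵥ (Γ *ᵥ x) = x ⬝ᵥ x := by
    intro x
    have h := hconj 1 x
    rw [Matrix.mul_one, hΓ] at h
    simp only [Matrix.one_mulVec] at h
    exact h.symm
  have hSconj : ∀ τ (x : Fin p → ℝ),
      x ⬝ᵥ S τ *ᵥ x = (Γ *ᵥ x) ⬝ᵥ (R * W τ * Rᵀ) *ᵥ (Γ *ᵥ x) := by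
    intro τ x
    rw [hSrepr2 τ, hconj]
  -- scalar PE / UB bounds
  have hUBq : ∀ t, t₀ ≤ t → ∀ x : Fin p → ℝ,
      (∫ τ in t..(t + T₀), x ⬝ᵥ S τ *ᵥ x) ≤ μ₂ * (x ⬝ᵥ x) := by
    intro t ht x
    have hpsd := hUB t (le_trans ht₀ ht)
    have h0 := qf_nonneg hpsd (Γ *ᵥ x)
    rw [Matrix.sub_mulVec, dotProduct_sub, Matrix.smul_mulVec,
      Matrix.one_mulVec, dotProduct_smul, smul_eq_mul, dot_intMat hRWe] at h0
    have hint : (∫ τ in t..(t + T₀), (Γ *ᵥ x) ⬝ᵥ (R * W τ * Rᵀ) *ᵥ (Γ *ᵥ x))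
        = ∫ τ in t..(t + T₀), x ⬝ᵥ S τ *ᵥ x :=
      intervalIntegral.integral_congr fun τ _ => (hSconj τ x).symm
    rw [hint, hGdot x] at h0
    linarith
  have hPEq : ∀ x : Fin p → ℝ,
      μ₁ * (x ⬝ᵥ x) ≤ ∫ τ in t₀..(t₀ + T₀), x ⬝ᵥ S τ *ᵥ x := by
    intro x
    have hpsd := hPE t₀ ht₀
    have h0 := qf_nonneg hpsd (Γ *ᵥ x)
    rw [Matrix.sub_mulVec, dotProduct_sub, Matrix.smul_mulVec,
      Matrix.one_mulVec, dotProduct_smul, smul_eq_mul, dot_intMat hRWe] at h0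
    have hint : (∫ τ in t₀..(t₀ + T₀), (Γ *ᵥ x) ⬝ᵥ (R * W τ * Rᵀ) *ᵥ (Γ *ᵥ x))
        = ∫ τ in t₀..(t₀ + T₀), x ⬝ᵥ S τ *ᵥ x :=
      intervalIntegral.integral_congr fun τ _ => (hSconj τ x).symm
    rw [hint, hGdot x] at h0
    linarith
  -- dynamics
  have hy' : ∀ t, HasDerivAt y ((-k) • (Λ *ᵥ (S t *ᵥ y t))) t := by
    intro t
    have hmat : Λ * Γᵀ * R * W t * Rᵀ * Γ = Λ * S t := by
      simp [hS, Matrix.mul_assoc]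
    have h : HasDerivAt y ((-k) • ((Λ * S t) *ᵥ (y t))) t := by
      rw [← hmat]; exact hy t
    rw [← Matrix.mulVec_mulVec] at h
    exact h
  -- core
  obtain ⟨hlow, hup⟩ := core hp hk hd hΛ hSpsd hSe ht₀ hT₀ hμ₁ hμ₂ hPEq hUBq hy'
  -- output rewriting
  have hout : ∀ τ, euclNorm (((hWpsd τ).sqrt * Rᵀ * Γ).mulVec (y τ)) ^ 2
      = y τ ⬝ᵥ S τ *ᵥ y τ := by
    intro τ
    set C := (hWpsd τ).sqrt * Rᵀ * Γ with hC
    rw [euclNorm_sq]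
    have h1 : (C.mulVec (y τ)) ⬝ᵥ (C.mulVec (y τ)) = y τ ⬝ᵥ (Cᵀ * C) *ᵥ y τ := by
      conv_rhs => rw [← Matrix.mulVec_mulVec, dotProduct_mulVec, vecMul_transpose]
    rw [h1]
    have hherm : ((hWpsd τ).sqrt)ᵀ = (hWpsd τ).sqrt :=
      psd_transpose_eq (hWpsd τ).posSemidef_sqrt
    have hCT : Cᵀ = Γᵀ * (R * (hWpsd τ).sqrt) := by
      rw [hC, Matrix.transpose_mul, Matrix.transpose_mul, Matrix.transpose_transpose, hherm]
    have hCS : Cᵀ * C = S τ := by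
      rw [hCT, hC]
      have hsq : (hWpsd τ).sqrt * (hWpsd τ).sqrt = W τ := (hWpsd τ).sqrt_mul_self
      calc (Γᵀ * (R * (hWpsd τ).sqrt)) * ((hWpsd τ).sqrt * Rᵀ * Γ)
          = Γᵀ * (R * ((hWpsd τ).sqrt * (hWpsd τ).sqrt) * Rᵀ * Γ) := by
            simp only [Matrix.mul_assoc]
        _ = S τ := by rw [hsq, hS]; simp [Matrix.mul_assoc]
    rw [hCS]
  have hinteq : (∫ τ in t₀..(t₀ + T₀), euclNorm (((hWpsd τ).sqrt * Rᵀ * Γ).mulVec (y τ)) ^ 2)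
      = ∫ τ in t₀..(t₀ + T₀), y τ ⬝ᵥ S τ *ᵥ y τ :=
    intervalIntegral.integral_congr fun τ _ => hout τ
  have hYeq : euclNorm (y t₀) ^ 2 = y t₀ ⬝ᵥ y t₀ := euclNorm_sq _
  constructor
  · rw [hinteq, hYeq]
    exact hlow
  · rw [hinteq, hYeq]
    have hJUB : (∫ τ in t₀..(t₀ + T₀), y τ ⬝ᵥ S τ *ᵥ y τ) ≤ μ₂ * (y t₀ ⬝ᵥ y t₀) := hup
    have hexp1 : 1 ≤ Real.exp (k ^ 2 * p * matOpNorm Λ ^ 2 * μ₂ ^ 2) := by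
      apply Real.one_le_exp
      have hN0 := (opNorm_bound hd hΛ).1
      positivity
    have hY0 : 0 ≤ y t₀ ⬝ᵥ y t₀ := dot_self_nonneg _
    have hstep : μ₂ * (y t₀ ⬝ᵥ y t₀) * 1 ≤ μ₂ * (y t₀ ⬝ᵥ y t₀) * Real.exp (k ^ 2 * p * matOpNorm Λ ^ 2 * μ₂ ^ 2) :=
      mul_le_mul_of_nonneg_left hexp1 (mul_nonneg hμ₂.le hY0)
    nlinarith [hJUB, hstep]
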